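/- arXiv:1806.04490 — 3 statements merged into one kernel-verified Lean document; each statement's English description precedes it below -/
import Mathlib

section
/- Any complex eigenvalue σ ≠ 1 of the π-return matrix P^π_D satisfies Re σ ≤ 1 - λ - γ, where γ = 1-λ - max{Re σ' : σ' eigenvalue of P_D, σ' ≠ 1-λ} > 0 is the spectral gap of P_D. -/
open Matrix BigOperators

/-- `σ` is a (complex) eigenvalue of the matrix `M`. -/
def IsEigval {D : Type*} [Fintype D] [DecidableEq D] (M : Matrix D D ℂ) (σ : ℂ) : Prop :=
  ∃ v : D → ℂ, v ≠ 0 ∧ M.mulVec v = σ • v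

/-- Irreducibility of a nonnegative matrix. -/
def MatIrreducible {D : Type*} [Fintype D] [DecidableEq D] (P : Matrix D D ℝ) : Prop :=
  ∀ x y : D, ∃ n : ℕ, 0 < (P ^ n) x y

section Aux

variable {D : Type*} [Fintype D] [DecidableEq D]

lemma aux_pow_nonneg (P : Matrix D D ℝ) (hnn : ∀ x y, 0 ≤ P x y) (n : ℕ) :
    ∀ x y, 0 ≤ (P ^ n) x y := by
  induction n with
  | zero => intro x y; by_cases h : x = y <;> simp [Matrix.one_apply, h]
  | succ n ih =>
    intro x y
    rw [pow_succ, Matrix.mul_apply]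
    exact Finset.sum_nonneg fun z _ => mul_nonneg (ih x z) (hnn z y)

lemma aux_pow_mulVec (P : Matrix D D ℝ) (f : D → ℝ) (μ : ℝ)
    (h : P.mulVec f = μ • f) (n : ℕ) : (P ^ n).mulVec f = μ ^ n • f := by
  induction n with
  | zero => simp [Matrix.one_mulVec]
  | succ n ih =>
    rw [pow_succ, ← Matrix.mulVec_mulVec, h, Matrix.mulVec_smul, ih,
      smul_smul, pow_succ, mul_comm]

/-- positivity propagation for nonnegative eigenvectors of irreducible matrices -/
lemma aux_perron_pos (P : Matrix D D ℝ) (hnn : ∀ x y, 0 ≤ P x y)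
    (hirr : MatIrreducible P) (μ : ℝ) (hμ : 0 < μ)
    (f : D → ℝ) (hfnn : ∀ x, 0 ≤ f x) (hf0 : f ≠ 0)
    (heig : P.mulVec f = μ • f) : ∀ x, 0 < f x := by
  obtain ⟨y, hy⟩ : ∃ y, 0 < f y := by
    by_contra h
    push_neg at h
    exact hf0 (funext fun x => le_antisymm (h x) (hfnn x))
  intro x
  obtain ⟨n, hn⟩ := hirr x y
  have hpow := aux_pow_mulVec P f μ heig n
  have hnnpow := aux_pow_nonneg P hnn n
  have hsum : μ ^ n * f x = ∑ z, (P ^ n) x z * f z := by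
    have := congrFun hpow x
    simpa [Matrix.mulVec, dotProduct] using this.symm
  have hge : (P ^ n) x y * f y ≤ ∑ z, (P ^ n) x z * f z :=
    Finset.single_le_sum (fun z _ => mul_nonneg (hnnpow x z) (hfnn z)) (Finset.mem_univ y)
  nlinarith [pow_pos hμ n, mul_pos hn hy]

/-- the entrywise modulus of a complex eigenvector for the eigenvalue μ (the spectral radius)
is again an eigenvector. -/
lemma aux_mod_eigen (P : Matrix D D ℝ) (hnn : ∀ x y, 0 ≤ P x y) (μ : ℝ) (hμ0 : 0 ≤ μ)
    (π : D → ℝ) (hπpos : ∀ x, 0 < π x) (hπeig : Pᵀ.mulVec π = μ • π)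
    (u : D → ℂ) (heig : (P.map Complex.ofReal).mulVec u = ((μ : ℝ) : ℂ) • u) :
    P.mulVec (fun x => ‖u x‖) = μ • (fun x => ‖u x‖) := by
  have hcol : ∀ y, ∑ x, P x y * π x = μ * π y := by
    intro y
    have := congrFun hπeig y
    simpa [Matrix.mulVec, dotProduct, Matrix.transpose_apply, mul_comm] using this
  -- pointwise inequality
  have hpt : ∀ x, μ * ‖u x‖ ≤ ∑ y, P x y * ‖u y‖ := by
    intro x
    have hx := congrFun heig x
    have h2 : ‖((μ : ℝ) : ℂ) * u x‖ = ‖∑ y, ((P x y : ℝ) : ℂ) * u y‖ := by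
      have h3 : ∑ y, ((P x y : ℝ) : ℂ) * u y = ((μ : ℝ) : ℂ) * u x := by
        simpa [Matrix.mulVec, dotProduct, Matrix.map_apply] using hx
      rw [h3]
    calc μ * ‖u x‖ = ‖((μ : ℝ) : ℂ) * u x‖ := by
          rw [norm_mul, Complex.norm_real, Real.norm_eq_abs, abs_of_nonneg hμ0]
      _ = ‖∑ y, ((P x y : ℝ) : ℂ) * u y‖ := h2
      _ ≤ ∑ y, ‖((P x y : ℝ) : ℂ) * u y‖ := norm_sum_le _ _
      _ = ∑ y, P x y * ‖u y‖ := by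
          refine Finset.sum_congr rfl fun y _ => ?_
          rw [norm_mul, Complex.norm_real, Real.norm_eq_abs, abs_of_nonneg (hnn x y)]
  -- weighted sum of slacks is zero
  have h1 : ∑ x, π x * ∑ y, P x y * ‖u y‖
      = μ * ∑ y, π y * ‖u y‖ := by
    calc ∑ x, π x * ∑ y, P x y * ‖u y‖
        = ∑ x, ∑ y, π x * (P x y * ‖u y‖) := by simp_rw [Finset.mul_sum]
      _ = ∑ y, ∑ x, π x * (P x y * ‖u y‖) := Finset.sum_comm
      _ = ∑ y, (∑ x, P x y * π x) * ‖u y‖ := by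
          refine Finset.sum_congr rfl fun y _ => ?_
          rw [Finset.sum_mul]
          exact Finset.sum_congr rfl fun x _ => by ring
      _ = μ * ∑ y, π y * ‖u y‖ := by
          simp_rw [hcol, Finset.mul_sum]
          exact Finset.sum_congr rfl fun y _ => by ring
  have hzero : ∑ x, π x * ((∑ y, P x y * ‖u y‖) - μ * ‖u x‖) = 0 := by
    simp_rw [mul_sub, Finset.sum_sub_distrib]
    rw [h1]
    rw [show ∑ x, π x * (μ * ‖u x‖) = μ * ∑ x, π x * ‖u x‖ by
      rw [Finset.mul_sum]; exact Finset.sum_congr rfl fun x _ => by ring]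
    ring
  have heach : ∀ x, (∑ y, P x y * ‖u y‖) = μ * ‖u x‖ := by
    intro x
    have hterm : π x * ((∑ y, P x y * ‖u y‖) - μ * ‖u x‖) = 0 := by
      have := (Finset.sum_eq_zero_iff_of_nonneg ?_).mp hzero x (Finset.mem_univ x)
      · exact this
      · intro z _
        exact mul_nonneg (hπpos z).le (sub_nonneg.mpr (hpt z))
    have := mul_eq_zero.mp hterm
    rcases this with h | h
    · exact absurd h (hπpos x).ne'
    · linarith [sub_eq_zero.mp h]
  funext x
  simp only [Matrix.mulVec, dotProduct, Pi.smul_apply, smul_eq_mul]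
  exact heach x

end Aux

theorem pi_return_eigenvalues_spectral_gap
    {D : Type*} [Fintype D] [DecidableEq D]
    (hcard : 2 ≤ Fintype.card D)
    (P : Matrix D D ℝ)
    (hnn : ∀ x y, 0 ≤ P x y)
    (hrow : ∀ x, ∑ y, P x y ≤ 1)
    (hirr : MatIrreducible P)
    (lam : ℝ)
    (hsr_ub : ∀ σ : ℂ, IsEigval (P.map Complex.ofReal) σ → ‖σ‖ ≤ 1 - lam)
    (hsr_attained : ∃ σ : ℂ, IsEigval (P.map Complex.ofReal) σ ∧ ‖σ‖ = 1 - lam)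
    (π : D → ℝ)
    (hπnn : ∀ x, 0 ≤ π x) (hπsum : ∑ x, π x = 1)
    (hπeig : Pᵀ.mulVec π = (1 - lam) • π)
    (γ : ℝ) (hγpos : 0 < γ)
    (hgap_ub : ∀ σ : ℂ, IsEigval (P.map Complex.ofReal) σ → σ ≠ ((1 - lam : ℝ) : ℂ) →
      σ.re ≤ 1 - lam - γ)
    (hgap_attained : ∃ σ : ℂ, IsEigval (P.map Complex.ofReal) σ ∧ σ ≠ ((1 - lam : ℝ) : ℂ) ∧
      σ.re = 1 - lam - γ) :
    ∀ σ : ℂ,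
      IsEigval ((Matrix.of fun x y => P x y + (1 - ∑ z, P x z) * π y).map Complex.ofReal) σ →
      σ ≠ 1 → σ.re ≤ 1 - lam - γ := by
  intro σ hσ hσ1
  obtain ⟨v, hv0, hveig⟩ := hσ
  set μ : ℝ := 1 - lam with hμdef
  -- μ ≥ 0
  have hμ0 : 0 ≤ μ := by
    obtain ⟨σ', _, habs⟩ := hsr_attained
    exact habs ▸ norm_nonneg σ' 
  -- column sums of P against π
  have hcol : ∀ y, ∑ x, π x * P x y = μ * π y := by
    intro y
    have := congrFun hπeig y
    simpa [Matrix.mulVec, dotProduct, Matrix.transpose_apply, mul_comm] using this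
  -- the eigen equation, componentwise
  have hcomp : ∀ x, (∑ y, ((P x y : ℝ) : ℂ) * v y)
      + ((1 - ∑ z, P x z : ℝ) : ℂ) * (∑ y, ((π y : ℝ) : ℂ) * v y) = σ * v x := by
    intro x
    have := congrFun hveig x
    simp only [Matrix.mulVec, dotProduct, Matrix.map_apply, Matrix.of_apply,
      Pi.smul_apply, smul_eq_mul] at this
    rw [← this]
    push_cast
    rw [Finset.mul_sum]
    rw [← Finset.sum_add_distrib]
    exact Finset.sum_congr rfl fun y _ => by ring
  set c : ℂ := ∑ y, ((π y : ℝ) : ℂ) * v y with hcdef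
  -- π-weighted average: c = σ c
  have hkey : c = σ * c := by
    have hLHS : ∑ x, ((π x : ℝ) : ℂ) * (σ * v x) = σ * c := by
      rw [hcdef, Finset.mul_sum]
      exact Finset.sum_congr rfl fun x _ => by ring
    have hsum1 : ∑ x, ((π x : ℝ) : ℂ) * (∑ y, ((P x y : ℝ) : ℂ) * v y)
        = ((μ : ℝ) : ℂ) * c := by
      calc ∑ x, ((π x : ℝ) : ℂ) * (∑ y, ((P x y : ℝ) : ℂ) * v y)
          = ∑ x, ∑ y, ((π x : ℝ) : ℂ) * (((P x y : ℝ) : ℂ) * v y) := by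
            simp_rw [Finset.mul_sum]
        _ = ∑ y, ∑ x, ((π x : ℝ) : ℂ) * (((P x y : ℝ) : ℂ) * v y) := Finset.sum_comm
        _ = ∑ y, ((∑ x, π x * P x y : ℝ) : ℂ) * v y := by
            refine Finset.sum_congr rfl fun y _ => ?_
            push_cast
            rw [Finset.sum_mul]
            exact Finset.sum_congr rfl fun x _ => by ring
        _ = ((μ : ℝ) : ℂ) * c := by
            simp_rw [hcol]
            rw [hcdef, Finset.mul_sum]
            push_cast
            exact Finset.sum_congr rfl fun y _ => by ring
    have hq : ∑ x, ((π x : ℝ) : ℂ) * ((1 - ∑ z, P x z : ℝ) : ℂ) = ((1 - μ : ℝ) : ℂ) := by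
      have hreal : ∑ x, π x * (1 - ∑ z, P x z) = 1 - μ := by
        have : ∑ x, π x * (1 - ∑ z, P x z) = (∑ x, π x) - ∑ x, ∑ z, π x * P x z := by
          simp_rw [mul_sub, mul_one, Finset.sum_sub_distrib, Finset.mul_sum]
        rw [this, hπsum, Finset.sum_comm]
        simp_rw [hcol]
        rw [← Finset.mul_sum, hπsum, mul_one]
      push_cast [← hreal]
      exact Finset.sum_congr rfl fun x _ => by push_cast; ring
    have hexp : ∑ x, ((π x : ℝ) : ℂ) * ((∑ y, ((P x y : ℝ) : ℂ) * v y)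
        + ((1 - ∑ z, P x z : ℝ) : ℂ) * c) = σ * c := by
      rw [← hLHS]
      exact Finset.sum_congr rfl fun x _ => by rw [hcomp x]
    have : ((μ : ℝ) : ℂ) * c + ((1 - μ : ℝ) : ℂ) * c = σ * c := by
      rw [← hsum1, ← hexp]
      rw [show ∑ x, ((π x : ℝ) : ℂ) * ((∑ y, ((P x y : ℝ) : ℂ) * v y)
          + ((1 - ∑ z, P x z : ℝ) : ℂ) * c)
        = (∑ x, ((π x : ℝ) : ℂ) * (∑ y, ((P x y : ℝ) : ℂ) * v y))
          + (∑ x, ((π x : ℝ) : ℂ) * ((1 - ∑ z, P x z : ℝ) : ℂ)) * c by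
        rw [Finset.sum_mul, ← Finset.sum_add_distrib]
        exact Finset.sum_congr rfl fun x _ => by ring]
      rw [hq]
    calc c = ((μ : ℝ) : ℂ) * c + ((1 - μ : ℝ) : ℂ) * c := by push_cast; ring
      _ = σ * c := this
  have hc0 : c = 0 := by
    have hmul : (1 - σ) * c = 0 := by linear_combination hkey
    rcases mul_eq_zero.mp hmul with h | h
    · exact absurd (by linear_combination -h : σ = 1) hσ1
    · exact h
  -- v is an eigenvector of P itself
  have hPeig : (P.map Complex.ofReal).mulVec v = σ • v := by
    funext x
    simp only [Matrix.mulVec, dotProduct, Matrix.map_apply, Pi.smul_apply, smul_eq_mul]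
    have := hcomp x
    rw [hc0, mul_zero, add_zero] at this
    exact this
  by_cases hcase : σ = ((1 - lam : ℝ) : ℂ)
  · -- σ = μ real: derive a contradiction from c = 0
    exfalso
    subst hcase
    -- μ > 0
    have hμpos : 0 < μ := by
      rcases hμ0.lt_or_eq with h | h
      · exact h
      · exfalso
        -- μ = 0 : π is in the kernel of Pᵀ, contradiction with irreducibility
        obtain ⟨x₀, hx₀⟩ : ∃ x, 0 < π x := by
          by_contra hno
          push_neg at hno
          have : ∑ x, π x = 0 :=
            Finset.sum_eq_zero fun x _ => le_antisymm (hno x) (hπnn x)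
          rw [hπsum] at this; norm_num at this
        have hker : ∀ y, ∑ x, π x * P x y = 0 := by
          intro y; rw [hcol y, ← h, zero_mul]
        have hrow0 : ∀ y, P x₀ y = 0 := by
          intro y
          have := (Finset.sum_eq_zero_iff_of_nonneg
            (fun x _ => mul_nonneg (hπnn x) (hnn x y))).mp (hker y) x₀ (Finset.mem_univ x₀)
          rcases mul_eq_zero.mp this with h' | h'
          · exact absurd h' hx₀.ne'
          · exact h'
        obtain ⟨y₀, hy₀⟩ := Fintype.exists_ne_of_one_lt_card (by omega) x₀
        obtain ⟨n, hn⟩ := hirr x₀ y₀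
        rcases n with _ | m
        · simp [Matrix.one_apply, (by simpa [eq_comm] using hy₀ : ¬ x₀ = y₀)] at hn
        · rw [pow_succ', Matrix.mul_apply] at hn
          have : ∑ z, P x₀ z * (P ^ m) z y₀ = 0 :=
            Finset.sum_eq_zero fun z _ => by rw [hrow0 z, zero_mul]
          rw [this] at hn; exact lt_irrefl 0 hn
    -- π is strictly positive
    have hTirr : MatIrreducible Pᵀ := by
      intro x y
      obtain ⟨n, hn⟩ := hirr y x
      exact ⟨n, by rw [← Matrix.transpose_pow]; simpa [Matrix.transpose_apply] using hn⟩
    have hπpos : ∀ x, 0 < π x := by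
      refine aux_perron_pos Pᵀ (fun x y => hnn y x) hTirr μ hμpos π hπnn ?_ hπeig
      intro h
      rw [h] at hπsum; simp at hπsum
    -- |v| is a positive eigenvector
    have hveigμ : (P.map Complex.ofReal).mulVec v = ((μ : ℝ) : ℂ) • v := hPeig
    have hw : P.mulVec (fun x => ‖v x‖) = μ • (fun x => ‖v x‖) :=
      aux_mod_eigen P hnn μ hμ0 π hπpos hπeig v hveigμ
    have hw0 : (fun x => ‖v x‖) ≠ 0 := by
      intro h
      apply hv0
      funext x
      have := congrFun h x
      simpa using this
    have hwpos : ∀ x, 0 < ‖v x‖ :=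
      aux_perron_pos P hnn hirr μ hμpos _ (fun x => norm_nonneg _) hw0 hw
    -- collinearity: v = c₀ • |v|
    have hne : Nonempty D := Fintype.card_pos_iff.mp (by omega)
    obtain ⟨x₀⟩ := hne
    set c₀ : ℂ := v x₀ / ((‖v x₀‖ : ℝ) : ℂ) with hc₀def
    set z : D → ℂ := fun x => v x - c₀ * ((‖v x‖ : ℝ) : ℂ) with hzdef
    clear_value c₀ z
    have hwc : (P.map Complex.ofReal).mulVec (fun x => ((‖v x‖ : ℝ) : ℂ))
        = ((μ : ℝ) : ℂ) • (fun x => ((‖v x‖ : ℝ) : ℂ)) := by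
      funext x
      have := congrFun hw x
      simp only [Matrix.mulVec, dotProduct, Pi.smul_apply, smul_eq_mul] at this ⊢
      simp only [Matrix.map_apply]
      have h4 := congrArg (Complex.ofReal) this
      push_cast at h4
      exact h4
    have hzeig : (P.map Complex.ofReal).mulVec z = ((μ : ℝ) : ℂ) • z := by
      funext x
      simp only [hzdef, Matrix.mulVec, dotProduct, Pi.smul_apply, smul_eq_mul] at *
      have h1 := congrFun hveigμ x
      have h2 := congrFun hwc x
      simp only [Matrix.mulVec, dotProduct, Pi.smul_apply, smul_eq_mul] at h1 h2
      calc ∑ y, (P.map Complex.ofReal) x y * (v y - c₀ * ((‖v y‖ : ℝ) : ℂ))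
          = (∑ y, (P.map Complex.ofReal) x y * v y)
            - c₀ * ∑ y, (P.map Complex.ofReal) x y * ((‖v y‖ : ℝ) : ℂ) := by
            rw [Finset.mul_sum, ← Finset.sum_sub_distrib]
            exact Finset.sum_congr rfl fun y _ => by ring
        _ = ((μ : ℝ) : ℂ) * v x - c₀ * (((μ : ℝ) : ℂ) * ((‖v x‖ : ℝ) : ℂ)) := by
            rw [h1, h2]
        _ = ((μ : ℝ) : ℂ) * (v x - c₀ * ((‖v x‖ : ℝ) : ℂ)) := by ring
    have hzx₀ : z x₀ = 0 := by
      simp only [hzdef, hc₀def]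
      rw [div_mul_cancel₀]
      · ring
      · simp only [ne_eq, Complex.ofReal_eq_zero]
        exact (hwpos x₀).ne'
    have hz0 : z = 0 := by
      by_contra hz
      have hzw : P.mulVec (fun x => ‖z x‖) = μ • (fun x => ‖z x‖) :=
        aux_mod_eigen P hnn μ hμ0 π hπpos hπeig z hzeig
      have hzw0 : (fun x => ‖z x‖) ≠ 0 := by
        intro h
        apply hz
        funext x
        have := congrFun h x
        simpa using this
      have := aux_perron_pos P hnn hirr μ hμpos _ (fun x => norm_nonneg _) hzw0 hzw x₀
      rw [hzx₀] at this
      simp at this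
    -- so v = c₀ * |v| pointwise; plug into c = 0
    have hvc : ∀ x, v x = c₀ * ((‖v x‖ : ℝ) : ℂ) := by
      intro x
      have := congrFun hz0 x
      simp only [hzdef, Pi.zero_apply] at this
      linear_combination this
    have hcval : c = c₀ * ((∑ y, π y * ‖v y‖ : ℝ) : ℂ) := by
      rw [hcdef]
      push_cast
      rw [Finset.mul_sum]
      refine Finset.sum_congr rfl fun y _ => ?_
      conv_lhs => rw [hvc y]
      ring
    have hpos : 0 < ∑ y, π y * ‖v y‖ := by
      exact Finset.sum_pos (fun y _ => mul_pos (hπpos y) (hwpos y)) ⟨x₀, Finset.mem_univ x₀⟩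
    rw [hc0] at hcval
    have hc₀0 : c₀ = 0 := by
      rcases mul_eq_zero.mp hcval.symm with h | h
      · exact h
      · exfalso
        rw [Complex.ofReal_eq_zero] at h
        exact hpos.ne' h
    apply hv0
    funext x
    rw [hvc x, hc₀0, zero_mul]
    rfl
  · exact hgap_ub σ ⟨v, hv0, hPeig⟩ hcase
end

section
/- For any f : D → ℝ, x ∈ D, and t ≥ 0, the π-return semigroup satisfies exp(t(P^π_D − I)) f (x) = exp(t(P_D − I)) (f − ⟨π,f⟩·1)(x) + ⟨π,f⟩, where ⟨π,f⟩ = ∑_x π(x) f(x). -/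
open Matrix BigOperators

attribute [local instance] Matrix.linftyOpNormedRing Matrix.linftyOpNormedAlgebra

noncomputable def mulVecCLM {D : Type*} [Fintype D] [DecidableEq D] (v : D → ℝ) :
    Matrix D D ℝ →L[ℝ] (D → ℝ) :=
  LinearMap.toContinuousLinearMap
    { toFun := fun M => M.mulVec v
      map_add' := fun M N => Matrix.add_mulVec M N v
      map_smul' := fun c M => Matrix.smul_mulVec c M v }

lemma exp_mulVec_congr {D : Type*} [Fintype D] [DecidableEq D]
    (A B : Matrix D D ℝ) (v : D → ℝ)
    (h : ∀ n : ℕ, (A ^ n).mulVec v = (B ^ n).mulVec v) :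
    (NormedSpace.exp A).mulVec v = (NormedSpace.exp B).mulVec v := by
  have key : ∀ M : Matrix D D ℝ, (NormedSpace.exp M).mulVec v
      = ∑' n : ℕ, ((n.factorial : ℝ)⁻¹ • (M ^ n).mulVec v) := by
    intro M
    have hs := NormedSpace.expSeries_summable' (𝕂 := ℝ) M
    rw [NormedSpace.exp_eq_tsum ℝ]
    have := (mulVecCLM (D := D) v).map_tsum hs
    simpa [mulVecCLM, Matrix.smul_mulVec] using this
  rw [key, key]
  exact tsum_congr fun n => by rw [h n]

theorem pi_return_semigroup_vs_killed_semigroup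
    {D : Type*} [Fintype D] [DecidableEq D] [Nonempty D]
    (P : Matrix D D ℝ)
    (hnn : ∀ x y, 0 ≤ P x y)
    (hrow : ∀ x, ∑ y, P x y ≤ 1)
    (hirr : MatIrreducible P)
    (lam : ℝ)
    (hsr_ub : ∀ σ : ℂ, IsEigval (P.map Complex.ofReal) σ → ‖σ‖ ≤ 1 - lam)
    (hsr_attained : ∃ σ : ℂ, IsEigval (P.map Complex.ofReal) σ ∧ ‖σ‖ = 1 - lam)
    (π : D → ℝ)
    (hπnn : ∀ x, 0 ≤ π x) (hπsum : ∑ x, π x = 1)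
    (hπeig : Pᵀ.mulVec π = (1 - lam) • π) :
    ∀ (f : D → ℝ) (x : D) (t : ℝ), 0 ≤ t →
      (NormedSpace.exp
          (t • ((Matrix.of fun x y => P x y + (1 - ∑ z, P x z) * π y) - 1))).mulVec f x
        = (NormedSpace.exp (t • (P - 1))).mulVec
            (f - fun _ => ∑ y, π y * f y) x + ∑ y, π y * f y := by
  intro f x t ht
  set Pπ : Matrix D D ℝ := Matrix.of fun x y => P x y + (1 - ∑ z, P x z) * π y with hPπ
  set c : ℝ := ∑ y, π y * f y with hc
  set g : D → ℝ := f - fun _ => c with hg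
  set A : Matrix D D ℝ := t • (Pπ - 1) with hA
  set B : Matrix D D ℝ := t • (P - 1) with hB
  -- π left-eigenvector, column form
  have hcol : ∀ z, ∑ y, P y z * π y = (1 - lam) * π z := by
    intro z
    have := congrFun hπeig z
    simpa [Matrix.mulVec, dotProduct, Matrix.transpose_apply, mul_comm] using this
  -- Pπ agrees with P on vectors orthogonal to π
  have hPπ_eq : ∀ v : D → ℝ, (∑ y, π y * v y = 0) → Pπ.mulVec v = P.mulVec v := by
    intro v hv
    funext z
    have : ∑ y, (P z y + (1 - ∑ w, P z w) * π y) * v y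
        = ∑ y, P z y * v y + (1 - ∑ w, P z w) * ∑ y, π y * v y := by
      rw [Finset.mul_sum, ← Finset.sum_add_distrib]
      exact Finset.sum_congr rfl fun y _ => by ring
    simp [Matrix.mulVec, dotProduct, hPπ, this, hv]
  -- π-orthogonality is preserved by P
  have hSP : ∀ v : D → ℝ, (∑ y, π y * v y = 0) → ∑ y, π y * (P.mulVec v) y = 0 := by
    intro v hv
    have : ∑ y, π y * (P.mulVec v) y = ∑ z, (∑ y, P y z * π y) * v z := by
      simp only [Matrix.mulVec, dotProduct, Finset.mul_sum, Finset.sum_mul]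
      rw [Finset.sum_comm]
      exact Finset.sum_congr rfl fun z _ => Finset.sum_congr rfl fun y _ => by ring
    rw [this]
    have : ∑ z, (∑ y, P y z * π y) * v z = (1 - lam) * ∑ z, π z * v z := by
      rw [Finset.mul_sum]
      exact Finset.sum_congr rfl fun z _ => by rw [hcol z]; ring
    rw [this, hv, mul_zero]
  -- hence preserved by B
  have hSB : ∀ v : D → ℝ, (∑ y, π y * v y = 0) → ∑ y, π y * (B.mulVec v) y = 0 := by
    intro v hv
    have hBv : B.mulVec v = t • (P.mulVec v - v) := by
      rw [hB, Matrix.smul_mulVec, Matrix.sub_mulVec, Matrix.one_mulVec]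
    rw [hBv]
    simp only [Pi.smul_apply, Pi.sub_apply, smul_eq_mul]
    have : ∑ y, π y * (t * ((P.mulVec v) y - v y))
        = t * (∑ y, π y * (P.mulVec v) y - ∑ y, π y * v y) := by
      rw [mul_sub, Finset.mul_sum, Finset.mul_sum, ← Finset.sum_sub_distrib]
      exact Finset.sum_congr rfl fun y _ => by ring
    rw [this, hSP v hv, hv, sub_zero, mul_zero]
  -- A and B agree on π-orthogonal vectors
  have hAB : ∀ v : D → ℝ, (∑ y, π y * v y = 0) → A.mulVec v = B.mulVec v := by
    intro v hv
    rw [hA, hB, Matrix.smul_mulVec, Matrix.smul_mulVec,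
      Matrix.sub_mulVec, Matrix.sub_mulVec, hPπ_eq v hv]
  -- g is π-orthogonal
  have hSg : ∑ y, π y * g y = 0 := by
    have : ∑ y, π y * g y = (∑ y, π y * f y) - (∑ y, π y) * c := by
      rw [Finset.sum_mul, ← Finset.sum_sub_distrib]
      exact Finset.sum_congr rfl fun y _ => by simp [hg]; ring
    rw [this, hπsum, ← hc, one_mul, sub_self]
  -- powers agree on g
  have hpow : ∀ n : ℕ, (A ^ n).mulVec g = (B ^ n).mulVec g
      ∧ ∑ y, π y * ((B ^ n).mulVec g) y = 0 := by
    intro n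
    induction n with
    | zero => simpa using hSg
    | succ n ih =>
      constructor
      · rw [pow_succ', pow_succ', ← Matrix.mulVec_mulVec, ← Matrix.mulVec_mulVec,
          ih.1, hAB _ ih.2]
      · rw [pow_succ', ← Matrix.mulVec_mulVec]
        exact hSB _ ih.2
  -- A kills constants
  have hAc : A.mulVec (fun _ => c) = 0 := by
    funext z
    have hrowPπ : ∑ y, Pπ z y = 1 := by
      simp only [hPπ, Matrix.of_apply, Finset.sum_add_distrib, ← Finset.mul_sum, hπsum]
      ring
    have : (Pπ - 1).mulVec (fun _ => c) z = 0 := by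
      rw [Matrix.sub_mulVec, Matrix.one_mulVec]
      simp only [Pi.sub_apply, Matrix.mulVec, dotProduct]
      rw [← Finset.sum_mul, hrowPπ, one_mul, sub_self]
    rw [hA, Matrix.smul_mulVec]
    simp [this]
  have hpowc : ∀ n : ℕ, (A ^ n).mulVec (fun _ => c) = ((0 : Matrix D D ℝ) ^ n).mulVec (fun _ => c) := by
    intro n
    cases n with
    | zero => simp
    | succ n =>
      rw [pow_succ, ← Matrix.mulVec_mulVec, hAc, Matrix.mulVec_zero,
        pow_succ, ← Matrix.mulVec_mulVec, Matrix.zero_mulVec, Matrix.mulVec_zero]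
  -- assemble
  have hfg : f = g + (fun _ => c) := by
    funext y; simp [hg]
  have hexpg : (NormedSpace.exp A).mulVec g = (NormedSpace.exp B).mulVec g :=
    exp_mulVec_congr A B g fun n => (hpow n).1
  have hexpc : (NormedSpace.exp A).mulVec (fun _ => c) = fun _ => c := by
    rw [exp_mulVec_congr A 0 (fun _ => c) hpowc, NormedSpace.exp_zero, Matrix.one_mulVec]
  calc (NormedSpace.exp A).mulVec f x
      = ((NormedSpace.exp A).mulVec g + (NormedSpace.exp A).mulVec (fun _ => c)) x := by
        rw [← Matrix.mulVec_add, ← hfg]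
    _ = (NormedSpace.exp B).mulVec g x + c := by
        rw [Pi.add_apply, hexpg, hexpc]
    _ = (NormedSpace.exp B).mulVec (f - fun _ => c) x + c := by rw [← hg]
end

section
/- Let B̃ be a linear endomorphism of a finite dimensional real inner product space with all complex eigenvalues having negative real part, and let A be symmetric and positive definite. Then the solution K̃ = 2∫_0^∞ e^{sB̃} A e^{sB̃*} ds of the Lyapunov equation B̃K̃ + K̃B̃* + 2A = 0 is positive definite. -/
open Set NormedSpace
open scoped ENNReal NNReal
set_option synthInstance.maxHeartbeats 1000000
set_option maxHeartbeats 1000000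

lemma exp_apply_eigenvector {W : Type*} [NormedAddCommGroup W] [NormedSpace ℂ W]
    [CompleteSpace W] (L : W →L[ℂ] W) {lam : ℂ} {w : W} (hw : L w = lam • w) :
    NormedSpace.exp L w = Complex.exp lam • w := by
  have hpow : ∀ n : ℕ, (L ^ n) w = lam ^ n • w := by
    intro n
    induction n with
    | zero => simp
    | succ n ih =>
      rw [pow_succ, ContinuousLinearMap.mul_apply, hw, map_smul, ih, smul_smul, pow_succ,
        mul_comm]
  have hsum := NormedSpace.expSeries_summable' (𝕂 := ℂ) L
  have happ : NormedSpace.exp L w = ∑' n : ℕ, (((n.factorial : ℂ))⁻¹ • L ^ n) w := by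
    rw [NormedSpace.exp_eq_tsum (𝕂 := ℂ)]
    exact ((ContinuousLinearMap.apply ℂ W w).map_tsum hsum)
  rw [happ]
  have h2 : ∀ n : ℕ, (((n.factorial : ℂ))⁻¹ • L ^ n) w = (((n.factorial : ℂ))⁻¹ * lam ^ n) • w := by
    intro n
    rw [ContinuousLinearMap.smul_apply, hpow, smul_smul]
  simp_rw [h2]
  rw [Summable.tsum_smul_const ?_, Complex.exp_eq_exp_ℂ, NormedSpace.exp_eq_tsum (𝕂 := ℂ)]
  · simp_rw [smul_eq_mul]
  · exact (NormedSpace.expSeries_summable' (𝕂 := ℂ) lam).congr (fun n => by simp [smul_eq_mul])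

lemma spec_exp_lt {n : ℕ} (Mc : Matrix (Fin n) (Fin n) ℂ)
    (h : ∀ σ : ℂ, Mc.charpoly.IsRoot σ → σ.re < 0)
    {μ : ℂ} (hμ : μ ∈ spectrum ℂ (NormedSpace.exp (Matrix.toEuclideanCLM (𝕜 := ℂ) Mc))) :
    ‖μ‖₊ < 1 := by
  set W := EuclideanSpace ℂ (Fin n)
  set L : W →L[ℂ] W := Matrix.toEuclideanCLM (𝕜 := ℂ) Mc with hL
  set T := NormedSpace.exp L with hT
  let e := Module.End.toContinuousLinearMap W (𝕜 := ℂ)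
  have hμ' : μ ∈ spectrum ℂ (e.symm T) := by
    rwa [AlgEquiv.spectrum_eq e.symm T]
  have hev : Module.End.HasEigenvalue (e.symm T) μ :=
    Module.End.hasEigenvalue_iff_mem_spectrum.mpr hμ'
  set Eig := Module.End.eigenspace (e.symm T) μ with hEig
  haveI : Nontrivial Eig := Submodule.nontrivial_iff_ne_bot.mpr hev
  have hcomm : Commute L T := (Commute.refl L).exp_right
  have hmaps : ∀ x ∈ Eig, (e.symm L) x ∈ Eig := by
    intro x hx
    rw [hEig, Module.End.mem_eigenspace_iff] at hx ⊢
    have : T (L x) = L (T x) := by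
      rw [← ContinuousLinearMap.mul_apply, ← ContinuousLinearMap.mul_apply, hcomm.eq]
    show T (L x) = μ • L x
    rw [this]
    have : T x = μ • x := hx
    rw [this, map_smul]
  obtain ⟨lam, hlam⟩ := Module.End.exists_eigenvalue ((e.symm L).restrict hmaps)
  obtain ⟨u, hu⟩ := hlam.exists_hasEigenvector
  have hu0 : (u : W) ≠ 0 := fun hc => hu.2 (Subtype.coe_injective (by simpa using hc))
  have hLu : L (u : W) = lam • (u : W) := by
    have := hu.apply_eq_smul
    have h2 : ((e.symm L).restrict hmaps) u = lam • u := this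
    have h3 := congrArg (Subtype.val) h2
    exact h3
  -- lam is a root of the charpoly
  have hroot : Mc.charpoly.IsRoot lam := by
    have hev2 : Module.End.HasEigenvalue (e.symm L) lam :=
      Module.End.hasEigenvalue_of_hasEigenvector ⟨Module.End.mem_eigenspace_iff.mpr hLu, hu0⟩
    have hmin : (minpoly ℂ (e.symm L)).IsRoot lam :=
      (Module.End.hasEigenvalue_iff_isRoot).mp hev2
    have hdvd : minpoly ℂ (e.symm L) ∣ LinearMap.charpoly (e.symm L) :=
      LinearMap.minpoly_dvd_charpoly _
    have hcp : LinearMap.charpoly (e.symm L) = Mc.charpoly := by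
      have hcoe : (e.symm L : W →ₗ[ℂ] W) = Matrix.toLin
          (PiLp.basisFun 2 ℂ (Fin n)) (PiLp.basisFun 2 ℂ (Fin n)) Mc := by
        rw [← Matrix.toEuclideanLin_eq_toLin]
        rfl
      have : LinearMap.toMatrix (PiLp.basisFun 2 ℂ (Fin n)) (PiLp.basisFun 2 ℂ (Fin n))
          (e.symm L : W →ₗ[ℂ] W) = Mc := by
        rw [hcoe, LinearMap.toMatrix_toLin]
      rw [← this, LinearMap.charpoly_toMatrix]
    rw [← hcp]
    exact hmin.dvd hdvd
  -- μ = exp lam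
  have hTu : T (u : W) = Complex.exp lam • (u : W) := exp_apply_eigenvector L hLu
  have hTu2 : T (u : W) = μ • (u : W) := Module.End.mem_eigenspace_iff.mp u.2
  have hμeq : μ = Complex.exp lam := by
    have : (μ - Complex.exp lam) • (u : W) = 0 := by
      rw [sub_smul, ← hTu2, ← hTu, sub_self]
    rcases smul_eq_zero.mp this with h1 | h2
    · exact (sub_eq_zero.mp h1)
    · exact absurd h2 hu0
  rw [hμeq]
  have : ‖Complex.exp lam‖ = Real.exp lam.re := Complex.norm_exp lam
  rw [← NNReal.coe_lt_coe]
  simpa [coe_nnnorm, this] using Real.exp_lt_one_iff.mpr (h lam hroot)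

lemma euclidean_exp_decay {n : ℕ} (hn : 0 < n) (Mc : Matrix (Fin n) (Fin n) ℂ)
    (h : ∀ σ : ℂ, Mc.charpoly.IsRoot σ → σ.re < 0) :
    ∃ C ε : ℝ, 0 < C ∧ 0 < ε ∧ ∀ s : ℝ, 0 ≤ s →
      ‖NormedSpace.exp ((s : ℂ) • (Matrix.toEuclideanCLM (𝕜 := ℂ) Mc))‖ ≤
        C * Real.exp (-ε * s) := by
  haveI : Nonempty (Fin n) := ⟨⟨0, hn⟩⟩
  letI : NormedAlgebra ℚ (EuclideanSpace ℂ (Fin n) →L[ℂ] EuclideanSpace ℂ (Fin n)) :=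
    NormedAlgebra.restrictScalars ℚ ℂ _
  haveI : Nontrivial (EuclideanSpace ℂ (Fin n)) := inferInstance
  haveI : Nontrivial (EuclideanSpace ℂ (Fin n) →L[ℂ] EuclideanSpace ℂ (Fin n)) := by
    obtain ⟨x, hx⟩ := exists_ne (0 : EuclideanSpace ℂ (Fin n))
    exact ⟨1, 0, fun hc => hx (by simpa using congrArg (fun f : EuclideanSpace ℂ (Fin n) →L[ℂ] EuclideanSpace ℂ (Fin n) => f x) hc)⟩
  set L : EuclideanSpace ℂ (Fin n) →L[ℂ] EuclideanSpace ℂ (Fin n) := Matrix.toEuclideanCLM (𝕜 := ℂ) Mc with hLdef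
  set T := NormedSpace.exp L with hTdef
  -- spectral radius < 1
  have hρ : spectralRadius ℂ T < 1 := by
    have := spectrum.spectralRadius_lt_of_forall_lt (a := T) (r := 1)
      (fun z hz => spec_exp_lt Mc h hz)
    simpa using this
  -- find m with ‖T ^ m‖ < 1
  obtain ⟨m, hm1, hTm⟩ : ∃ m : ℕ, 1 ≤ m ∧ ‖T ^ m‖₊ < 1 := by
    have hto := spectrum.pow_nnnorm_pow_one_div_tendsto_nhds_spectralRadius T
    have hev := hto.eventually_lt_const hρ
    obtain ⟨m, hm1, hm2⟩ := (hev.and (Filter.eventually_ge_atTop 1)).exists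
    refine ⟨m, hm2, ?_⟩
    by_contra hc
    push_neg at hc
    have h1 : (1 : ℝ≥0∞) ≤ (‖T ^ m‖₊ : ℝ≥0∞) ^ (1 / (m : ℝ)) := by
      calc (1 : ℝ≥0∞) = 1 ^ (1 / (m : ℝ)) := by rw [ENNReal.one_rpow]
      _ ≤ (‖T ^ m‖₊ : ℝ≥0∞) ^ (1 / (m : ℝ)) := by
          apply ENNReal.rpow_le_rpow _ (by positivity)
          exact_mod_cast hc
    exact absurd hm1 (not_lt.mpr h1)
  set a := ‖T ^ m‖ with hadef
  have ha1 : a < 1 := by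
    have := hTm
    rw [← NNReal.coe_lt_coe] at this
    simpa [hadef, coe_nnnorm] using this
  have ha0 : 0 < a := by
    rw [hadef, norm_pos_iff]
    exact ((NormedSpace.isUnit_exp L).pow m).ne_zero
  have hm0 : (0 : ℝ) < m := by exact_mod_cast hm1
  -- sup over [0, m]
  have hcont : Continuous fun s : ℝ => ‖NormedSpace.exp ((s : ℂ) • L)‖ :=
    (NormedSpace.exp_continuous.comp (Complex.continuous_ofReal.smul continuous_const)).norm
  have hne : (Set.Icc (0:ℝ) (m:ℝ)).Nonempty := ⟨0, Set.mem_Icc.mpr ⟨le_rfl, hm0.le⟩⟩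
  obtain ⟨r₀, hr₀, hC₁⟩ := isCompact_Icc.exists_isMaxOn hne hcont.continuousOn
  rw [isMaxOn_iff] at hC₁
  set C₁ := ‖NormedSpace.exp (r₀ • L)‖ with hC₁def
  have hC₁pos : 0 < C₁ := by
    have h0 : ‖NormedSpace.exp (((0:ℝ):ℂ) • L)‖ ≤ C₁ := hC₁ 0 (Set.mem_Icc.mpr ⟨le_rfl, hm0.le⟩)
    have : ‖NormedSpace.exp (((0:ℝ):ℂ) • L)‖ = 1 := by
      have hz := zero_smul ℂ L
      rw [show (((0:ℝ):ℂ) • L) = (0:ℂ) • L by norm_num, hz, NormedSpace.exp_zero]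
      exact norm_one
    linarith
  -- key induction
  have key : ∀ k : ℕ, ∀ r ∈ Set.Icc (0:ℝ) (m:ℝ),
      ‖NormedSpace.exp ((((k : ℝ) * m + r : ℝ) : ℂ) • L)‖ ≤ a ^ k * C₁ := by
    intro k
    induction k with
    | zero => intro r hr; have h := hC₁ r hr; simp only [Nat.cast_zero, zero_mul, zero_add, pow_zero, one_mul]; exact h
    | succ k ih =>
      intro r hr
      have hsplit : ((((k+1 : ℕ) : ℝ) * m + r : ℝ) : ℂ) = ((m : ℝ) : ℂ) + (((k : ℝ) * m + r : ℝ) : ℂ) := by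
        push_cast; ring
      rw [hsplit]
      have hadd := add_smul (((m:ℝ)):ℂ) ((((k:ℝ) * m + r : ℝ)):ℂ) L
      rw [hadd]
      rw [NormedSpace.exp_add_of_commute (((Commute.refl L).smul_left _).smul_right _)]
      have hTm' : NormedSpace.exp (((m : ℝ) : ℂ) • L) = T ^ m := by
        rw [show (((m:ℕ) : ℝ) : ℂ) = ((m : ℕ) : ℂ) by push_cast; ring]
        have hcast := Nat.cast_smul_eq_nsmul ℂ m L
        rw [hcast, NormedSpace.exp_nsmul]
      calc ‖NormedSpace.exp (((m:ℝ):ℂ) • L) * NormedSpace.exp ((((k:ℝ) * m + r : ℝ):ℂ) • L)‖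
          ≤ ‖NormedSpace.exp (((m:ℝ):ℂ) • L)‖ * ‖NormedSpace.exp ((((k:ℝ) * m + r : ℝ):ℂ) • L)‖ :=
            norm_mul_le _ _
        _ ≤ a * (a ^ k * C₁) := by
            apply mul_le_mul _ (ih r hr) (norm_nonneg _) ha0.le
            rw [hTm']
        _ = a ^ (k+1) * C₁ := by ring
  -- conclude
  have hloga : Real.log a < 0 := Real.log_neg ha0 ha1
  refine ⟨C₁ / a, -Real.log a / m, by positivity, div_pos (neg_pos.mpr hloga) hm0,
    fun s hs => ?_⟩
  set k := ⌊s / m⌋₊ with hkdef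
  have hk1 : (k : ℝ) * m ≤ s := by
    have := Nat.floor_le (div_nonneg hs hm0.le)
    calc (k:ℝ) * m ≤ (s/m) * m := by nlinarith
    _ = s := by field_simp
  have hk2 : s < ((k:ℝ) + 1) * m := by
    have := Nat.lt_floor_add_one (s / m)
    calc s = (s/m)*m := by field_simp
    _ < ((k:ℝ)+1)*m := by nlinarith
  have hr : s - (k:ℝ)*m ∈ Set.Icc (0:ℝ) (m:ℝ) := ⟨by linarith, by nlinarith⟩
  have hb := key k _ hr
  rw [show ((k:ℝ)*m + (s - (k:ℝ)*m) : ℝ) = s by ring] at hb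
  have hak : a ^ k ≤ Real.exp (-Real.log a / m * (-s)) / a := by
    have h1 : a ^ k = a ^ ((k : ℝ)) := (Real.rpow_natCast a k).symm
    have h2 : a ^ ((k:ℝ)) ≤ a ^ (s/m - 1) := by
      apply Real.rpow_le_rpow_of_exponent_ge ha0 ha1.le
      have : s / m < (k:ℝ) + 1 := by rw [div_lt_iff₀ hm0]; linarith
      linarith
    have h3 : a ^ (s/m - 1 : ℝ) = Real.exp (Real.log a * (s/m - 1)) :=
      Real.rpow_def_of_pos ha0 _
    rw [h1]
    refine h2.trans (le_of_eq ?_)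
    rw [h3, show Real.log a * (s/m - 1) = Real.log a * (s/m) + (- Real.log a) by ring,
      Real.exp_add, Real.exp_neg, Real.exp_log ha0, div_eq_mul_inv]
    congr 2
    field_simp
  calc ‖NormedSpace.exp ((s:ℂ) • L)‖ ≤ a ^ k * C₁ := hb
    _ ≤ Real.exp (-Real.log a / m * (-s)) / a * C₁ := by
        apply mul_le_mul_of_nonneg_right hak hC₁pos.le
    _ = C₁ / a * Real.exp (-(-Real.log a / m) * s) := by
        rw [show -(-Real.log a / (m:ℝ)) * s = -Real.log a / (m:ℝ) * -s by ring]
        ring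


section Bridge
variable {V : Type*} [NormedAddCommGroup V] [NormedSpace ℝ V] [FiniteDimensional ℝ V]

noncomputable def PsiHom (b : Module.Basis (Fin (Module.finrank ℝ V)) ℝ V) :
    (V →L[ℝ] V) →+* (EuclideanSpace ℂ (Fin (Module.finrank ℝ V)) →L[ℂ]
      EuclideanSpace ℂ (Fin (Module.finrank ℝ V))) :=
  ((Matrix.toEuclideanCLM (𝕜 := ℂ) (n := Fin (Module.finrank ℝ V))).toRingEquiv.toRingHom).comp
    (((algebraMap ℝ ℂ).mapMatrix).comp
      (((LinearMap.toMatrixAlgEquiv b).toRingEquiv.toRingHom).comp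
        (ContinuousLinearMap.toLinearMapRingHom)))

lemma PsiHom_apply (b : Module.Basis (Fin (Module.finrank ℝ V)) ℝ V) (X : V →L[ℝ] V) :
    PsiHom b X = Matrix.toEuclideanCLM (𝕜 := ℂ)
      (((LinearMap.toMatrix b b) (X : V →ₗ[ℝ] V)).map (algebraMap ℝ ℂ)) := rfl

lemma PsiHom_smul (b : Module.Basis (Fin (Module.finrank ℝ V)) ℝ V) (s : ℝ) (X : V →L[ℝ] V) :
    PsiHom b (s • X) = (s : ℂ) • PsiHom b X := by
  rw [PsiHom_apply, PsiHom_apply]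
  rw [← map_smul (Matrix.toEuclideanCLM (𝕜 := ℂ) (n := Fin (Module.finrank ℝ V))) (s:ℂ)]
  congr 1
  have h1 : ((s • X : V →L[ℝ] V) : V →ₗ[ℝ] V) = s • (X : V →ₗ[ℝ] V) := rfl
  rw [h1, map_smul]
  ext i j
  simp [Matrix.map_apply, Matrix.smul_apply, Algebra.algebraMap_self, Complex.real_smul]


lemma PsiHom_continuous (b : Module.Basis (Fin (Module.finrank ℝ V)) ℝ V) :
    Continuous (PsiHom b) := by
  have hlin : IsLinearMap ℝ (PsiHom b) := by
    constructor
    · exact map_add (PsiHom b)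
    · intro s X
      rw [PsiHom_smul]
      exact (Complex.coe_smul s (PsiHom b X)).symm ▸ rfl
  exact (IsLinearMap.mk' _ hlin).continuous_of_finiteDimensional

noncomputable def PhiFun (b : Module.Basis (Fin (Module.finrank ℝ V)) ℝ V)
    (N : EuclideanSpace ℂ (Fin (Module.finrank ℝ V)) →L[ℂ]
      EuclideanSpace ℂ (Fin (Module.finrank ℝ V))) : (V →L[ℝ] V) :=
  LinearMap.toContinuousLinearMap ((LinearMap.toMatrixAlgEquiv b).symm
    (((Matrix.toEuclideanCLM (𝕜 := ℂ) (n := Fin (Module.finrank ℝ V))).symm N).map Complex.re))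

lemma PhiFun_PsiHom (b : Module.Basis (Fin (Module.finrank ℝ V)) ℝ V) (X : V →L[ℝ] V) :
    PhiFun b (PsiHom b X) = X := by
  rw [PhiFun, PsiHom_apply, StarAlgEquiv.symm_apply_apply]
  have h1 : (((LinearMap.toMatrix b b) (X : V →ₗ[ℝ] V)).map (algebraMap ℝ ℂ)).map Complex.re =
      (LinearMap.toMatrix b b) (X : V →ₗ[ℝ] V) := by
    ext i j
    simp [Matrix.map_apply]
  rw [h1]
  have h2 : (LinearMap.toMatrixAlgEquiv b).symm ((LinearMap.toMatrix b b) (X : V →ₗ[ℝ] V)) =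
      (X : V →ₗ[ℝ] V) := by
    have : (LinearMap.toMatrixAlgEquiv b) (X : V →ₗ[ℝ] V) =
        (LinearMap.toMatrix b b) (X : V →ₗ[ℝ] V) := rfl
    rw [← this, AlgEquiv.symm_apply_apply]
  rw [h2]
  ext x
  rfl

lemma PhiFun_linear (b : Module.Basis (Fin (Module.finrank ℝ V)) ℝ V) :
    IsLinearMap ℝ (PhiFun b) := by
  constructor
  · intro N₁ N₂
    rw [PhiFun, PhiFun, PhiFun, map_add]
    rw [show (((Matrix.toEuclideanCLM (𝕜 := ℂ)
        (n := Fin (Module.finrank ℝ V))).symm N₁ +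
        (Matrix.toEuclideanCLM (𝕜 := ℂ) (n := Fin (Module.finrank ℝ V))).symm N₂).map
        Complex.re) = ((Matrix.toEuclideanCLM (𝕜 := ℂ)
        (n := Fin (Module.finrank ℝ V))).symm N₁).map Complex.re +
        ((Matrix.toEuclideanCLM (𝕜 := ℂ)
        (n := Fin (Module.finrank ℝ V))).symm N₂).map Complex.re by
      ext i j; simp [Matrix.map_apply]]
    rw [map_add, map_add]
  · intro s N
    rw [PhiFun, PhiFun]
    have h0 : s • N = (s : ℂ) • N := (Complex.coe_smul s N).symm
    rw [h0, map_smul]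
    rw [show (((s:ℂ) • (Matrix.toEuclideanCLM (𝕜 := ℂ)
        (n := Fin (Module.finrank ℝ V))).symm N).map Complex.re) =
        s • (((Matrix.toEuclideanCLM (𝕜 := ℂ)
        (n := Fin (Module.finrank ℝ V))).symm N).map Complex.re) by
      ext i j
      simp [Matrix.map_apply, Matrix.smul_apply, Complex.real_smul, Complex.ofReal_mul,
        smul_eq_mul]]
    rw [map_smul, map_smul]

lemma norm_le_PsiHom (b : Module.Basis (Fin (Module.finrank ℝ V)) ℝ V) :
    ∃ c : ℝ, 0 ≤ c ∧ ∀ X : V →L[ℝ] V, ‖X‖ ≤ c * ‖PsiHom b X‖ := by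
  haveI : FiniteDimensional ℝ (EuclideanSpace ℂ (Fin (Module.finrank ℝ V)) →L[ℂ]
      EuclideanSpace ℂ (Fin (Module.finrank ℝ V))) := by
    exact Module.Finite.trans ℂ _
  set ΦL := IsLinearMap.mk' _ (PhiFun_linear b) with hΦL
  set ΦC := LinearMap.toContinuousLinearMap ΦL with hΦC
  refine ⟨‖ΦC‖, ΦC.opNorm_nonneg, fun X => ?_⟩
  have h1 : ΦC (PsiHom b X) = X := PhiFun_PsiHom b X
  calc ‖X‖ = ‖ΦC (PsiHom b X)‖ := by rw [h1]
  _ ≤ ‖ΦC‖ * ‖PsiHom b X‖ := ΦC.le_opNorm _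


lemma clm_exp_decay (B : V →L[ℝ] V)
    (hB : ∀ σ : ℂ, ((LinearMap.charpoly (B : V →ₗ[ℝ] V)).map (algebraMap ℝ ℂ)).IsRoot σ →
      σ.re < 0) :
    ∃ C ε : ℝ, 0 < ε ∧ ∀ s : ℝ, 0 ≤ s →
      ‖NormedSpace.exp (s • B)‖ ≤ C * Real.exp (-ε * s) := by
  letI : NormedAlgebra ℚ (V →L[ℝ] V) := NormedAlgebra.restrictScalars ℚ ℝ _
  rcases subsingleton_or_nontrivial V with hV | hV
  · haveI : Subsingleton (V →L[ℝ] V) := ⟨fun f g => ContinuousLinearMap.ext fun x => by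
      rw [Subsingleton.elim x 0, map_zero, map_zero]⟩
    exact ⟨1, 1, one_pos, fun s hs => by
      rw [Subsingleton.elim (NormedSpace.exp (s • B)) (0 : V →L[ℝ] V), norm_zero]; positivity⟩
  · have hn : 0 < Module.finrank ℝ V := Module.finrank_pos
    set b := Module.finBasis ℝ V with hb
    set Mc := ((LinearMap.toMatrix b b) (B : V →ₗ[ℝ] V)).map (algebraMap ℝ ℂ) with hMc
    have hchar : Mc.charpoly = (LinearMap.charpoly (B : V →ₗ[ℝ] V)).map (algebraMap ℝ ℂ) := by
      rw [hMc, Matrix.charpoly_map, LinearMap.charpoly_toMatrix]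
    obtain ⟨C, ε, hC, hε, hdecay⟩ := euclidean_exp_decay hn Mc (fun σ hσ => hB σ (hchar ▸ hσ))
    obtain ⟨c, hc0, hbound⟩ := norm_le_PsiHom b
    refine ⟨c * C, ε, hε, fun s hs => ?_⟩
    have h1 : PsiHom b (NormedSpace.exp (s • B)) = NormedSpace.exp (PsiHom b (s • B)) :=
      map_exp (PsiHom b) (PsiHom_continuous b) _
    have h2 : PsiHom b (s • B) = (s : ℂ) • Matrix.toEuclideanCLM (𝕜 := ℂ) Mc := by
      rw [PsiHom_smul, PsiHom_apply]
    have h3 : NormedSpace.exp ((s:ℂ) • Matrix.toEuclideanCLM (𝕜 := ℂ) Mc) =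
        NormedSpace.exp ((s:ℂ) • Matrix.toEuclideanCLM (𝕜 := ℂ) Mc) :=
      rfl
    calc ‖NormedSpace.exp (s • B)‖ ≤ c * ‖PsiHom b (NormedSpace.exp (s • B))‖ := hbound _
    _ = c * ‖NormedSpace.exp ((s:ℂ) • Matrix.toEuclideanCLM (𝕜 := ℂ) Mc)‖ := by
        rw [h1, h2, h3]
    _ ≤ c * (C * Real.exp (-ε * s)) := mul_le_mul_of_nonneg_left (hdecay s hs) hc0
    _ = c * C * Real.exp (-ε * s) := by ring

end Bridge


open MeasureTheory
open scoped RealInnerProductSpace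

theorem lyapunov_solution_positive_definite
    {V : Type*} [NormedAddCommGroup V] [InnerProductSpace ℝ V] [FiniteDimensional ℝ V]
    (B A : V →L[ℝ] V)
    (hB : ∀ σ : ℂ, ((LinearMap.charpoly (B : V →ₗ[ℝ] V)).map (algebraMap ℝ ℂ)).IsRoot σ →
      σ.re < 0)
    (hA : IsSelfAdjoint A)
    (hApos : ∀ v : V, v ≠ 0 → 0 < ⟪A v, v⟫) :
    ∀ v : V, v ≠ 0 →
      0 < ⟪((2 : ℝ) • ∫ s in Set.Ioi (0 : ℝ),
          NormedSpace.exp (s • B) ∘L A ∘L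
            NormedSpace.exp (s • (ContinuousLinearMap.adjoint B))) v, v⟫ := by
  intro v hv
  letI : NormedAlgebra ℚ (V →L[ℝ] V) := NormedAlgebra.restrictScalars ℚ ℝ _
  set B' := ContinuousLinearMap.adjoint B with hB'
  set F : ℝ → (V →L[ℝ] V) := fun s => NormedSpace.exp (s • B) ∘L A ∘L
    NormedSpace.exp (s • B') with hF
  obtain ⟨C, ε, hε, hdec⟩ := clm_exp_decay B hB
  have hexp1 : Continuous fun s : ℝ => NormedSpace.exp (s • B) :=
    NormedSpace.exp_continuous.comp (continuous_id.smul continuous_const)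
  have hexp2 : Continuous fun s : ℝ => NormedSpace.exp (s • B') :=
    NormedSpace.exp_continuous.comp (continuous_id.smul continuous_const)
  have hFcont : Continuous F :=
    hexp1.clm_comp (continuous_const.clm_comp hexp2)
  have hadj : ∀ s : ℝ, NormedSpace.exp (s • B') =
      ContinuousLinearMap.adjoint (NormedSpace.exp (s • B)) := by
    intro s
    rw [← ContinuousLinearMap.star_eq_adjoint, star_exp]
    congr 1
    rw [star_smul, star_trivial, ContinuousLinearMap.star_eq_adjoint]
  have hnorm : ∀ s : ℝ, ‖NormedSpace.exp (s • B')‖ = ‖NormedSpace.exp (s • B)‖ := by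
    intro s
    rw [hadj s]
    exact LinearIsometryEquiv.norm_map ContinuousLinearMap.adjoint _
  -- integrability
  have hFint : IntegrableOn F (Set.Ioi (0:ℝ)) := by
    refine Integrable.mono' (g := fun s => C * C * ‖A‖ * Real.exp (-(2*ε) * s)) ?_
      hFcont.aestronglyMeasurable ?_
    · exact (exp_neg_integrableOn_Ioi 0 (by positivity)).const_mul _
    · filter_upwards [ae_restrict_mem measurableSet_Ioi] with s hs
      have hs0 : (0:ℝ) ≤ s := le_of_lt hs
      have h1 : ‖F s‖ ≤ ‖NormedSpace.exp (s • B)‖ * (‖A‖ * ‖NormedSpace.exp (s • B')‖) :=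
        (ContinuousLinearMap.opNorm_comp_le _ _).trans
          (mul_le_mul_of_nonneg_left (ContinuousLinearMap.opNorm_comp_le _ _) (norm_nonneg _))
      have h2 := hdec s hs0
      have h3 : ‖NormedSpace.exp (s • B')‖ ≤ C * Real.exp (-ε * s) := (hnorm s).le.trans h2
      have hCpos : 0 ≤ C * Real.exp (-ε * s) :=
        le_trans (norm_nonneg _) h2
      calc ‖F s‖ ≤ ‖NormedSpace.exp (s • B)‖ * (‖A‖ * ‖NormedSpace.exp (s • B')‖) := h1
      _ ≤ (C * Real.exp (-ε * s)) * (‖A‖ * (C * Real.exp (-ε * s))) := by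
          apply mul_le_mul h2 _ (by positivity) hCpos
          exact mul_le_mul_of_nonneg_left h3 (norm_nonneg _)
      _ = C * C * ‖A‖ * (Real.exp (-ε * s) * Real.exp (-ε * s)) := by ring
      _ = C * C * ‖A‖ * Real.exp (-(2*ε) * s) := by
          rw [← Real.exp_add]; ring_nf
  -- pointwise positivity
  have hg : ∀ s : ℝ, 0 < ⟪F s v, v⟫ := by
    intro s
    have hw : NormedSpace.exp (s • B') v ≠ 0 := by
      intro hw0
      obtain ⟨U, hU⟩ := NormedSpace.isUnit_exp (s • B')
      apply hv
      have : (↑U⁻¹ * ↑U : V →L[ℝ] V) v = v := by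
        rw [Units.inv_mul]; rfl
      rw [← this, ContinuousLinearMap.mul_apply, hU, hw0, map_zero]
    have hrw : ⟪F s v, v⟫ = ⟪A (NormedSpace.exp (s • B') v), NormedSpace.exp (s • B') v⟫ := by
      have : F s v = NormedSpace.exp (s • B) (A (NormedSpace.exp (s • B') v)) := rfl
      rw [this]
      have hadj2 : NormedSpace.exp (s • B) =
          ContinuousLinearMap.adjoint (NormedSpace.exp (s • B')) := by
        rw [hadj s, ContinuousLinearMap.adjoint_adjoint]
      rw [hadj2, ContinuousLinearMap.adjoint_inner_left]
    rw [hrw]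
    exact hApos _ hw
  -- rewrite the inner product of the integral
  have hFv_int : Integrable (fun s => F s v) (volume.restrict (Set.Ioi (0:ℝ))) :=
    (ContinuousLinearMap.apply ℝ V v).integrable_comp hFint
  have h2' : (∫ s in Set.Ioi (0:ℝ), F s) v = ∫ s in Set.Ioi (0:ℝ), F s v :=
    ContinuousLinearMap.integral_apply hFint v
  have h3' : ⟪v, ∫ s in Set.Ioi (0:ℝ), F s v⟫ = ∫ s in Set.Ioi (0:ℝ), ⟪v, F s v⟫ :=
    ((innerSL ℝ v).integral_comp_comm hFv_int).symm
  have hgint : IntegrableOn (fun s => ⟪F s v, v⟫) (Set.Ioi (0:ℝ)) := by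
    have := (innerSL ℝ v).integrable_comp hFv_int
    refine this.congr ?_
    exact Filter.Eventually.of_forall (fun s => real_inner_comm _ _)
  have hpos : 0 < ∫ s in Set.Ioi (0:ℝ), ⟪F s v, v⟫ := by
    rw [setIntegral_pos_iff_support_of_nonneg_ae
      (Filter.Eventually.of_forall (fun s => (hg s).le)) hgint]
    have hsupp : Function.support (fun s => ⟪F s v, v⟫) ∩ Set.Ioi (0:ℝ) = Set.Ioi (0:ℝ) := by
      apply Set.inter_eq_self_of_subset_right
      intro s _
      exact (hg s).ne'
    rw [hsupp, Real.volume_Ioi]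
    exact ENNReal.zero_lt_top
  -- conclude
  have hfinal : ⟪((2 : ℝ) • ∫ s in Set.Ioi (0:ℝ), F s) v, v⟫ =
      2 * ∫ s in Set.Ioi (0:ℝ), ⟪F s v, v⟫ := by
    rw [ContinuousLinearMap.smul_apply, real_inner_smul_left, h2']
    congr 1
    rw [real_inner_comm, h3']
    exact integral_congr_ae (Filter.Eventually.of_forall (fun s => real_inner_comm _ _))
  rw [hF] at hfinal
  rw [hfinal]
  positivity
end
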